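/- Let X be a Banach space, P a bounded operator on X, and suppose X decomposes as a direct sum of a one-dimensional subspace spanned by a vector e with P e = e, and a closed P-invariant subspace X₀ on which ‖P^N restricted to X₀‖ ≤ τ < 1 for some integer N ≥ 1. Then every ζ ∈ ℂ with |ζ − 1| = ρ, where 0 < ρ < 1 and (1 − ρ)^N > τ, lies in the resolvent set of P. -/

import Mathlib

set_option maxHeartbeats 1000000 in
lemma aux_resolvent {Y : Type*} [NormedAddCommGroup Y] [NormedSpace ℂ Y] [CompleteSpace Y]
    (A : Y →L[ℂ] Y) (N : ℕ) (τ : ℝ) (hτ0 : 0 < τ) (hA : ‖A ^ N‖ ≤ τ)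
    (ζ : ℂ) (hζ : τ < ‖ζ‖ ^ N) : IsUnit (ζ • (1 : Y →L[ℂ] Y) - A) := by
  have hres : ζ ∈ resolventSet ℂ A := by
    by_contra hmem
    have hmem' : ζ ∈ spectrum ℂ A := hmem
    have h2 : ζ ^ N ∈ spectrum ℂ (A ^ N) :=
      spectrum.pow_image_subset A N ⟨ζ, hmem', rfl⟩
    have h3 : ‖ζ ^ N‖ ≤ ‖A ^ N‖ * ‖(1 : Y →L[ℂ] Y)‖ :=
      spectrum.norm_le_norm_mul_of_mem h2
    have h4 : ‖(1 : Y →L[ℂ] Y)‖ ≤ 1 := ContinuousLinearMap.norm_id_le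
    have h5 : ‖ζ ^ N‖ ≤ τ := by
      calc ‖ζ ^ N‖ ≤ ‖A ^ N‖ * ‖(1 : Y →L[ℂ] Y)‖ := h3
        _ ≤ τ * 1 := mul_le_mul hA h4 (norm_nonneg _) hτ0.le
        _ = τ := mul_one τ
    rw [norm_pow] at h5
    linarith
  rw [resolventSet, Set.mem_setOf_eq, Algebra.algebraMap_eq_smul_one] at hres
  exact hres

set_option maxHeartbeats 1000000 in
/-- Resolvent set from a spectral splitting: if `X = span{e} ⊕ X₀` (topological
direct sum with `X₀` closed), `P e = e`, `P(X₀) ⊆ X₀`, and `‖(P|_{X₀})^N‖ ≤ τ < 1`,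
then every `ζ` with `|ζ - 1| = ρ`, `0 < ρ < 1` and `(1 - ρ)^N > τ`, lies in the
resolvent set of `P`. -/
theorem resolvent_set_from_spectral_splitting {X : Type*} [NormedAddCommGroup X]
    [NormedSpace ℂ X] [CompleteSpace X]
    (e : X) (he : e ≠ 0) (X₀ : Submodule ℂ X) (hclosed : IsClosed (X₀ : Set X))
    (hcompl : IsCompl (Submodule.span ℂ {e}) X₀)
    (P : X →L[ℂ] X) (hPe : P e = e) (hPX₀ : ∀ x ∈ X₀, P x ∈ X₀)
    (N : ℕ) (hN : 1 ≤ N) (τ : ℝ) (hτ0 : 0 < τ) (hτ1 : τ < 1)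
    (hcontr : ∀ x ∈ X₀, ‖(P ^ N) x‖ ≤ τ * ‖x‖)
    (ρ : ℝ) (hρ0 : 0 < ρ) (hρ1 : ρ < 1) (hρτ : τ < (1 - ρ) ^ N) :
    ∀ ζ : ℂ, ‖ζ - 1‖ = ρ → IsUnit (ζ • (1 : X →L[ℂ] X) - P) := by
  intro ζ hζ
  -- basic facts about ζ
  have hζ1 : ζ ≠ 1 := by
    intro h; rw [h, sub_self, norm_zero] at hζ; exact hρ0.ne hζ
  have hζlow : 1 - ρ ≤ ‖ζ‖ := by
    have := norm_sub_norm_le (1 : ℂ) (1 - ζ)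
    simp only [sub_sub_cancel, norm_one] at this
    rw [← hζ, norm_sub_rev]; linarith
  -- the restricted operator on X₀
  haveI : CompleteSpace X₀ := hclosed.completeSpace_coe
  set P₀ : X₀ →L[ℂ] X₀ :=
    ContinuousLinearMap.codRestrict (P.comp X₀.subtypeL) X₀
      (fun x => hPX₀ x x.2) with hP₀
  have hP₀pow : ∀ (k : ℕ) (x : X₀), (((P₀ ^ k) x : X₀) : X) = (P ^ k) (x : X) := by
    intro k
    induction k with
    | zero => intro x; simp
    | succ k ih =>
      intro x
      rw [pow_succ, pow_succ]
      simp only [ContinuousLinearMap.mul_apply]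
      rw [ih (P₀ x)]
      rfl
  have hP₀N : ‖P₀ ^ N‖ ≤ τ := by
    apply ContinuousLinearMap.opNorm_le_bound _ hτ0.le
    intro x
    have := hcontr (x : X) x.2
    rw [← hP₀pow N x] at this
    simpa using this
  -- ζ is not in the spectrum of P₀
  have hspec : IsUnit (ζ • (1 : X₀ →L[ℂ] X₀) - P₀) := by
    apply aux_resolvent P₀ N τ hτ0 hP₀N
    calc τ < (1 - ρ) ^ N := hρτ
      _ ≤ ‖ζ‖ ^ N := pow_le_pow_left₀ (by linarith) hζlow N
  obtain ⟨u, hu⟩ := hspec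
  -- projections
  set p : Submodule ℂ X := Submodule.span ℂ {e} with hp
  have hpclosed : IsClosed (p : Set X) :=
    (Submodule.closed_of_finiteDimensional p)
  set πp : X →L[ℂ] p := p.linearProjOfClosedCompl X₀ hcompl hpclosed hclosed with hπp
  set π₀ : X →L[ℂ] X₀ := X₀.linearProjOfClosedCompl p hcompl.symm hclosed hpclosed with hπ₀
  have hπp_left : ∀ y : p, πp (y : X) = y :=
    fun y => Submodule.linearProjOfIsCompl_apply_left hcompl y
  have hπp_right : ∀ y : X₀, πp (y : X) = 0 :=
    fun y => Submodule.linearProjOfIsCompl_apply_right hcompl y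
  have hπ₀_left : ∀ y : X₀, π₀ (y : X) = y :=
    fun y => Submodule.linearProjOfIsCompl_apply_left hcompl.symm y
  have hπ₀_right : ∀ y : p, π₀ (y : X) = 0 :=
    fun y => Submodule.linearProjOfIsCompl_apply_right hcompl.symm y
  have hsum : ∀ x : X, ((πp x : X)) + ((π₀ x : X)) = x := by
    intro x
    have := Submodule.existsUnique_add_of_isCompl hcompl x
    -- use linear_proj_add
    have h := Submodule.projection_add_projection_eq_self hcompl x
    exact h
  -- P acts as identity on p
  have hPp : ∀ y : p, P (y : X) = (y : X) := by
    rintro ⟨y, hy⟩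
    rw [Submodule.mem_span_singleton] at hy
    obtain ⟨c, rfl⟩ := hy
    simp [hPe]
  set T : X →L[ℂ] X := ζ • (1 : X →L[ℂ] X) - P with hT
  -- candidate inverse
  set Q : X →L[ℂ] X := (ζ - 1)⁻¹ • (p.subtypeL ∘L πp) + X₀.subtypeL ∘L (↑u⁻¹ : X₀ →L[ℂ] X₀) ∘L π₀
    with hQ
  have hζ1' : (ζ - 1) ≠ 0 := sub_ne_zero.mpr hζ1
  -- T on p-part
  have hTp : ∀ y : p, T (y : X) = (ζ - 1) • (y : X) := by
    intro y
    simp only [hT, ContinuousLinearMap.sub_apply, ContinuousLinearMap.smul_apply,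
      ContinuousLinearMap.one_apply, hPp y, sub_smul, one_smul]
  -- T on X₀-part
  have hTX₀ : ∀ y : X₀, T (y : X) = (((ζ • (1 : X₀ →L[ℂ] X₀) - P₀) y : X₀) : X) := by
    intro y
    simp only [hT, ContinuousLinearMap.sub_apply, ContinuousLinearMap.smul_apply,
      ContinuousLinearMap.one_apply]
    rfl
  have huval : (↑u : X₀ →L[ℂ] X₀) = ζ • (1 : X₀ →L[ℂ] X₀) - P₀ := hu
  have hTQ : T * Q = 1 := by
    ext x
    simp only [ContinuousLinearMap.mul_apply, ContinuousLinearMap.one_apply]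
    rw [hQ]
    simp only [ContinuousLinearMap.add_apply, ContinuousLinearMap.smul_apply,
      ContinuousLinearMap.coe_comp', Function.comp_apply, Submodule.coe_subtypeL',
      Submodule.coe_subtype, map_add, map_smul]
    rw [hTp (πp x), hTX₀ ((↑u⁻¹ : X₀ →L[ℂ] X₀) (π₀ x))]
    have : ((ζ • (1 : X₀ →L[ℂ] X₀) - P₀) ((↑u⁻¹ : X₀ →L[ℂ] X₀) (π₀ x))) = π₀ x := by
      rw [← huval, ← ContinuousLinearMap.mul_apply, u.mul_inv, ContinuousLinearMap.one_apply]
    rw [this, smul_smul, inv_mul_cancel₀ hζ1', one_smul]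
    exact hsum x
  have hQT : Q * T = 1 := by
    ext x
    simp only [ContinuousLinearMap.mul_apply, ContinuousLinearMap.one_apply]
    have hTx : T x = (ζ - 1) • ((πp x : X)) + (((ζ • (1 : X₀ →L[ℂ] X₀) - P₀) (π₀ x) : X₀) : X) := by
      conv_lhs => rw [← hsum x]
      rw [map_add, hTp (πp x), hTX₀ (π₀ x)]
    have hπpTx : πp (T x) = (ζ - 1) • πp x := by
      rw [hTx, map_add, map_smul, hπp_left, hπp_right, add_zero]
    have hπ₀Tx : π₀ (T x) = (ζ • (1 : X₀ →L[ℂ] X₀) - P₀) (π₀ x) := by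
      rw [hTx, map_add, map_smul, hπ₀_left, hπ₀_right, smul_zero, zero_add]
    rw [hQ]
    simp only [ContinuousLinearMap.add_apply, ContinuousLinearMap.smul_apply,
      ContinuousLinearMap.coe_comp', Function.comp_apply, Submodule.coe_subtypeL',
      Submodule.coe_subtype]
    rw [hπpTx, hπ₀Tx, ← huval, ← ContinuousLinearMap.mul_apply, u.inv_mul,
      ContinuousLinearMap.one_apply]
    rw [Submodule.coe_smul, smul_smul, inv_mul_cancel₀ hζ1', one_smul]
    exact hsum x
  exact ⟨⟨T, Q, hTQ, hQT⟩, rfl⟩
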